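/- Let (G,α) be a weighted graph with expansion (H,β), and let E' be a multiset of edges on the vertices of H such that for each pair of vertices a,b of H, a and b lie in the same connected component of the graph (V(H),E') if and only if aRb. Then the chromatic polynomials satisfy χ_G = Σ_{S ⊆ E'} (−1)^{|S|} χ_{H+S}, where H+S denotes the graph obtained from H by adding the edge multiset S. -/

import Mathlib

open scoped BigOperators
open scoped Classical

namespace CSF

/-! ## Extended chromatic symmetric functions of multigraphs

A (multi)graph on a vertex type `V` is given by a multiset of edges `E : Multiset (Sym2 V)`
(loops and multiple edges allowed).  Colours are positive integers `ℕ+`, and the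
(extended) chromatic symmetric function lives in `MvPowerSeries ℕ+ ℚ`, the power series
in the commuting variables `x_j`, `j : ℕ+`. -/

/-- A proper colouring of the multigraph with edge multiset `E`. -/
def Proper {V C : Type*} (E : Multiset (Sym2 V)) (κ : V → C) : Prop :=
  ∀ u v : V, s(u, v) ∈ E → κ u ≠ κ v

/-- The monomial `∏_v x_{κ(v)}^{w(v)}`, recorded as its exponent vector. -/
noncomputable def mon {V : Type*} [Fintype V] (w : V → ℕ) (κ : V → ℕ+) : ℕ+ →₀ ℕ :=
  ∑ v, Finsupp.single (κ v) (w v)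

/-- The extended chromatic symmetric function `X_{(G,w)}` of the weighted graph with
edge multiset `E` and vertex weights `w`: the coefficient of a monomial `m` is the number
of proper colourings `κ` with `∏_v x_{κ(v)}^{w(v)} = x^m`. -/
noncomputable def X {V : Type*} [Fintype V] (E : Multiset (Sym2 V)) (w : V → ℕ) :
    MvPowerSeries ℕ+ ℚ :=
  fun m => (Nat.card {κ : V → ℕ+ // Proper E κ ∧ mon w κ = m} : ℚ)

/-- The chromatic polynomial `χ_G(k)`: the number of proper colourings with `k` colours. -/
noncomputable def chrom {V : Type*} [Fintype V] (E : Multiset (Sym2 V)) (k : ℕ) : ℕ :=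
  Nat.card {κ : V → Fin k // Proper E κ}

/-- Edge multiset of the labelled path `P_n` on `Fin n`: edges `v_i v_{i+1}`. -/
def pathE (n : ℕ) : Multiset (Sym2 (Fin n)) :=
  ((Finset.univ : Finset (Fin n × Fin n)).filter
    (fun p => (p.1 : ℕ) + 1 = (p.2 : ℕ))).val.map (fun p => s(p.1, p.2))

/-- Edge multiset of the labelled star `S_n` on `Fin n`: edges `v_i v_n`, `i ∈ [n-1]`. -/
def starE (n : ℕ) : Multiset (Sym2 (Fin n)) :=
  ((Finset.univ : Finset (Fin n × Fin n)).filter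
    (fun p => (p.1 : ℕ) + 1 < n ∧ (p.2 : ℕ) + 1 = n)).val.map (fun p => s(p.1, p.2))

/-- Edge multiset of a disjoint union of graphs on `Fin (m i)`, `i : Fin k`. -/
noncomputable def unionE {k : ℕ} {m : Fin k → ℕ}
    (Es : ∀ i, Multiset (Sym2 (Fin (m i)))) : Multiset (Sym2 (Σ i, Fin (m i))) :=
  ∑ i, (Es i).map (Sym2.map (fun v => ⟨i, v⟩))

/-- Extended chromatic symmetric function of a disjoint union of weighted graphs. -/
noncomputable def Xunion {k : ℕ} {m : Fin k → ℕ}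
    (Es : ∀ i, Multiset (Sym2 (Fin (m i)))) (ws : ∀ i, Fin (m i) → ℕ) :
    MvPowerSeries ℕ+ ℚ :=
  X (unionE Es) (fun v => ws v.1 v.2)

/-- `X_{P_l}`: chromatic symmetric function of the disjoint union of unweighted paths
`P_{l_1} ∪ ⋯ ∪ P_{l_k}`. -/
noncomputable def XPaths (l : List ℕ) : MvPowerSeries ℕ+ ℚ :=
  Xunion (m := fun i : Fin l.length => l.get i) (fun i => pathE (l.get i)) (fun _ _ => 1)

/-- `X_{S_l}`: chromatic symmetric function of a disjoint union of unweighted stars. -/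
noncomputable def XStars (l : List ℕ) : MvPowerSeries ℕ+ ℚ :=
  Xunion (m := fun i : Fin l.length => l.get i) (fun i => starE (l.get i)) (fun _ _ => 1)

/-- `X_{(P_{ℓ(α)}, α)}`: the extended chromatic symmetric function of the path on
`ℓ(α)` vertices whose `i`-th vertex has weight `α_i`. -/
noncomputable def Xwpath (α : List ℕ) : MvPowerSeries ℕ+ ℚ :=
  X (pathE α.length) (fun i => α.get i)

/-! ## Symmetric functions -/

/-- The power sum symmetric function `p_i = ∑_j x_j^i`. -/
noncomputable def pS (i : ℕ) : MvPowerSeries ℕ+ ℚ :=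
  fun m => if ∃ j : ℕ+, m = Finsupp.single j i then 1 else 0

/-- The complete homogeneous symmetric function `h_i`. -/
noncomputable def hS (i : ℕ) : MvPowerSeries ℕ+ ℚ :=
  fun m => if (m.sum fun _ k => k) = i then 1 else 0

/-- The elementary symmetric function `e_i`. -/
noncomputable def eS (i : ℕ) : MvPowerSeries ℕ+ ℚ :=
  fun m => if ((m.sum fun _ k => k) = i ∧ ∀ j, m j ≤ 1) then 1 else 0

/-- `p_λ = p_{λ_1} ⋯ p_{λ_k}`. -/
noncomputable def pProd (l : List ℕ) : MvPowerSeries ℕ+ ℚ := (l.map pS).prod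
/-- `h_λ = h_{λ_1} ⋯ h_{λ_k}`. -/
noncomputable def hProd (l : List ℕ) : MvPowerSeries ℕ+ ℚ := (l.map hS).prod
/-- `e_λ = e_{λ_1} ⋯ e_{λ_k}`. -/
noncomputable def eProd (l : List ℕ) : MvPowerSeries ℕ+ ℚ := (l.map eS).prod

/-- The algebra `Sym` of symmetric functions, realized as the subalgebra of
`MvPowerSeries ℕ+ ℚ` generated by the elementary symmetric functions. -/
noncomputable def SymAlg : Subalgebra ℚ (MvPowerSeries ℕ+ ℚ) :=
  Algebra.adjoin ℚ {f | ∃ i : ℕ, f = eS (i + 1)}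

/-- Sort a list into weakly decreasing order (the underlying partition `α̃`). -/
def sortDesc (l : List ℕ) : List ℕ := List.insertionSort (· ≥ ·) l

/-- Partitions: weakly decreasing lists of positive integers. -/
abbrev PartL : Type := {l : List ℕ // l.Pairwise (· ≥ ·) ∧ ∀ x ∈ l, 0 < x}

/-! ## Compositions -/

/-- All coarsenings of a composition: lists obtained by summing adjacent blocks. -/
def coarsenings : List ℕ → List (List ℕ)
  | [] => [[]]
  | a :: l =>
    (coarsenings l).map (fun β => a :: β) ++
      (coarsenings l).filterMap (fun β =>
        match β with
        | [] => none
        | b :: β' => some ((a + b) :: β'))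

/-- The ribbon Schur function `r_α = ∑_{β ≽ α} (-1)^{ℓ(α) - ℓ(β)} h_{β̃}`. -/
noncomputable def ribbon (α : List ℕ) : MvPowerSeries ℕ+ ℚ :=
  ((coarsenings α).map fun β =>
    ((-1 : ℚ) ^ (α.length - β.length)) • hProd (sortDesc β)).sum

lemma sum_take_get_le (α : List ℕ) (b : Fin α.length) :
    (α.take b).sum + α.get b ≤ α.sum := by
  have h1 : (α.take (b + 1)).sum = (α.take b).sum + α[b] := List.sum_take_succ α b b.isLt
  have h2 : (α.take (b + 1)).sum ≤ α.sum := by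
    conv_rhs => rw [← List.take_append_drop (b + 1) α]
    rw [List.sum_append]
    exact Nat.le_add_right _ _
  simpa [List.get_eq_getElem, ← h1] using h2

/-- Shift a graph on `Fin m` by an offset `o` inside `Fin n`. -/
def shiftE {m n : ℕ} (o : ℕ) (h : o + m ≤ n) (E : Multiset (Sym2 (Fin m))) :
    Multiset (Sym2 (Fin n)) :=
  E.map (Sym2.map (fun v : Fin m => (⟨o + (v : ℕ), by have := v.isLt; omega⟩ : Fin n)))

/-- The labelled graph `G_{α_1} | G_{α_2} | ⋯ | G_{α_k}` on `Fin (α₁ + ⋯ + α_k)`: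
consecutive blocks of vertices carry the graphs `Gr (α_i)`. -/
noncomputable def concatE (α : List ℕ) (Gr : (k : ℕ) → Multiset (Sym2 (Fin k))) :
    Multiset (Sym2 (Fin α.sum)) :=
  ∑ b : Fin α.length,
    shiftE ((α.take b).sum) (sum_take_get_le α b) (Gr (α.get b))

/-- `set(α) = {α_1, α_1+α_2, …, α_1+⋯+α_{ℓ(α)-1}} ⊆ [n-1]`. -/
def setC (α : List ℕ) : Finset ℕ :=
  ((List.range (α.length - 1)).map (fun j => (α.take (j + 1)).sum)).toFinset

/-- The labelled graph on `Fin n` whose edges are `v_i v_{i+1}` for `i ∈ S` (1-based). -/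
def edgesFromSet (n : ℕ) (S : Finset ℕ) : Multiset (Sym2 (Fin n)) :=
  ((Finset.univ : Finset (Fin n × Fin n)).filter
    (fun p => (p.1 : ℕ) + 1 = (p.2 : ℕ) ∧ (p.2 : ℕ) ∈ S)).val.map (fun p => s(p.1, p.2))

/-- `γ = α^c`, the complement composition: the composition of `|α|` with
`set(γ) = [n-1] − set(α)`. -/
def IsComplementOf (γ α : List ℕ) : Prop :=
  (∀ x ∈ γ, 0 < x) ∧ γ.sum = α.sum ∧ setC γ = Finset.Ioo 0 α.sum \ setC α

/-- Near concatenation `α ⊙ β` of compositions. -/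
def nconcat : List ℕ → List ℕ → List ℕ
  | [], β => β
  | [a], [] => [a]
  | [a], b :: β => (a + b) :: β
  | a :: l, β => a :: nconcat l β

/-- `β^{⊙ i}`, the `i`-fold near concatenation of `β` with itself. -/
def npowOdot (β : List ℕ) : ℕ → List ℕ
  | 0 => []
  | i + 1 => nconcat (npowOdot β i) β

/-- Composition of compositions: `α ∘ β = β^{⊙α_1} · ⋯ · β^{⊙α_{ℓ(α)}}`. -/
def compOp (α β : List ℕ) : List ℕ := (α.map (npowOdot β)).flatten

/-- The equivalence `α ∼ β`: `α` and `β` have `∘`-factorizations whose factors agree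
up to reversal.  (`[1]` is a two-sided identity for `∘`, so the empty fold is harmless.) -/
def simRel (α β : List ℕ) : Prop :=
  ∃ L M : List (List ℕ),
    List.Forall₂ (fun γ δ => (γ ≠ [] ∧ ∀ x ∈ γ, 0 < x) ∧ (δ = γ ∨ δ = γ.reverse)) L M ∧
    α = L.foldr compOp [1] ∧ β = M.foldr compOp [1]

/-- A trivial factorization `α = β ∘ γ`. -/
def TrivialFac (β γ : List ℕ) : Prop :=
  β = [1] ∨ γ = [1] ∨ (β.length = 1 ∧ γ.length = 1) ∨
    ((∀ x ∈ β, x = 1) ∧ ∀ x ∈ γ, x = 1)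

/-- `L` is an irreducible factorization of `α`. -/
def IsIrreducibleFac (α : List ℕ) (L : List (List ℕ)) : Prop :=
  (∀ γ ∈ L, γ ≠ [] ∧ ∀ x ∈ γ, 0 < x) ∧
  α = L.foldr compOp [1] ∧
  (∀ i : ℕ, ∀ h : i + 1 < L.length,
    ¬ TrivialFac (L.get ⟨i, by omega⟩) (L.get ⟨i + 1, h⟩)) ∧
  (∀ γ ∈ L, ∀ δ ε : List ℕ, δ ≠ [] → (∀ x ∈ δ, 0 < x) → ε ≠ [] → (∀ x ∈ ε, 0 < x) →
    γ = compOp δ ε → TrivialFac δ ε)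

/-- All compositions of `n` (lists of positive integers with sum `n`). -/
def comps : ℕ → List (List ℕ)
  | 0 => [[]]
  | n + 1 => (List.range (n + 1)).attach.flatMap fun j =>
      (comps j.1).map (fun c => (n + 1 - j.1) :: c)
  decreasing_by exact List.mem_range.mp j.2

/-- All refinements `α ≼ λ` of a composition `λ`. -/
def refinements : List ℕ → List (List ℕ)
  | [] => [[]]
  | a :: l => (comps a).flatMap fun c => (refinements l).map (fun r => c ++ r)

/-- All compositions `α ⊆ λ`: `ℓ(α) = ℓ(λ)` and `1 ≤ α_i ≤ λ_i`. -/
def boundedLists : List ℕ → List (List ℕ)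
  | [] => [[]]
  | a :: l => (List.range a).flatMap fun j => (boundedLists l).map (fun r => (j + 1) :: r)

/-! ## Expansions of weighted graphs -/

/-- Given a decomposition `L` of `β` witnessing `β ≼ α`, vertex `a` of `H` is in the block
`R(v_v)` (0-based `v`) when `a` lies among the consecutively labelled vertices of block `v`. -/
def inBlock (L : List (List ℕ)) (v a : ℕ) : Prop :=
  ((L.take v).map List.length).sum ≤ a ∧ a < ((L.take (v + 1)).map List.length).sum

/-- The relation `a R b`: `a` and `b` lie in a common block `R(v)`. -/
def Rrel (L : List (List ℕ)) (a b : ℕ) : Prop :=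
  ∃ v : ℕ, inBlock L v a ∧ inBlock L v b

/-! ## The lattice of contractions and its Möbius function -/

/-- The restriction of the graph `E` to `B` is connected. -/
def ConnOn {V : Type*} (E : Multiset (Sym2 V)) (B : Set V) : Prop :=
  ∀ a ∈ B, ∀ b ∈ B, Relation.ReflTransGen (fun x y => x ∈ B ∧ y ∈ B ∧ s(x, y) ∈ E) a b

/-- A connected set partition of the graph `E` (as a setoid on the vertices). -/
def ConnPart {V : Type*} (E : Multiset (Sym2 V)) (σ : Setoid V) : Prop :=
  ∀ v : V, ConnOn E {u | σ.r u v}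

/-- The lattice of contractions `L_G`: connected set partitions ordered by refinement. -/
def LContr {V : Type*} (E : Multiset (Sym2 V)) : Type _ := {σ : Setoid V // ConnPart E σ}

noncomputable instance setoidFintype {V : Type*} [Fintype V] : Fintype (Setoid V) :=
  Fintype.ofInjective (fun s : Setoid V => s.r)
    (fun s t h => by cases s; cases t; simp only at h; subst h; rfl)

noncomputable instance {V : Type*} [Fintype V] (E : Multiset (Sym2 V)) : Fintype (LContr E) :=
  letI := Classical.decPred (ConnPart E)
  Subtype.fintype _

instance {V : Type*} (E : Multiset (Sym2 V)) : PartialOrder (LContr E) :=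
  Subtype.partialOrder _

noncomputable instance {V : Type*} [Fintype V] (E : Multiset (Sym2 V)) :
    LocallyFiniteOrder (LContr E) :=
  letI := Classical.decRel (α := LContr E) (· < ·)
  letI := Classical.decRel (α := LContr E) (· ≤ ·)
  Fintype.toLocallyFiniteOrder

/-- The Möbius function of the lattice of contractions. -/
noncomputable def mobLC {V : Type*} [Fintype V] (E : Multiset (Sym2 V))
    (x y : LContr E) : ℚ :=
  letI := Classical.decEq (LContr E)
  IncidenceAlgebra.mu ℚ x y

/-- `p_{type(π,w)}`: the product over the blocks of `π` of `p_{(total weight of block)}`. -/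
noncomputable def ptype {V : Type*} [Fintype V] (σ : Setoid V) (w : V → ℕ) :
    MvPowerSeries ℕ+ ℚ :=
  letI := Classical.decEq (Quotient σ)
  letI := @Quotient.fintype V _ σ (Classical.decRel _)
  ∏ c : Quotient σ, pS (∑ v : V, if Quotient.mk σ v = c then w v else 0)

/-- `0̂`, the minimal element of the lattice of contractions: each vertex is its own block. -/
def botLC {V : Type*} (E : Multiset (Sym2 V)) : LContr E :=
  ⟨⊥, by
    intro v a ha b hb
    have ha' : a = v := ha
    have hb' : b = v := hb
    subst ha'; subst hb'; exact Relation.ReflTransGen.refl⟩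

/-! ## Composition of a composition with a weighted graph -/

section comp
variable {V : Type*} [Fintype V]

/-- The gluing relation: for `i ∈ S` (1-based), identify the vertex `z` of copy `i`
with the vertex `a` of copy `i + 1` (0-based copies `i - 1` and `i`). -/
def glueRel (a z : V) (n : ℕ) (S : Finset ℕ) : (Fin n × V) → (Fin n × V) → Prop :=
  fun x y => ∃ i ∈ S, ∃ (h1 : i - 1 < n) (h2 : i < n),
    x = (⟨i - 1, h1⟩, z) ∧ y = (⟨i, h2⟩, a)

def glueSetoid (a z : V) (n : ℕ) (S : Finset ℕ) : Setoid (Fin n × V) :=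
  Relation.EqvGen.setoid (glueRel a z n S)

/-- Vertices of the graph obtained from `n` copies of a graph on `V` by contracting the
connecting edges `z_i a_{i+1}`, `i ∈ S`. -/
def compV (a z : V) (n : ℕ) (S : Finset ℕ) : Type _ := Quotient (glueSetoid a z n S)

noncomputable instance (a z : V) (n : ℕ) (S : Finset ℕ) : Fintype (compV a z n S) :=
  @Quotient.fintype _ _ (glueSetoid a z n S) (Classical.decRel _)

/-- Edges: all edges of the `n` copies of `E`, together with the connecting edges
`z_i a_{i+1}` for `i ∈ [n-1] − S` (the ones not contracted). -/
noncomputable def compE (E : Multiset (Sym2 V)) (a z : V) (n : ℕ) (S : Finset ℕ) :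
    Multiset (Sym2 (compV a z n S)) :=
  (∑ i : Fin n, E.map (Sym2.map fun v =>
      (Quotient.mk (glueSetoid a z n S) (i, v) : compV a z n S)))
  + ((Finset.Ioo 0 n \ S).attach.val.map fun i =>
      s((Quotient.mk (glueSetoid a z n S)
          (⟨i.1 - 1, by
            have := i.2; simp only [Finset.mem_sdiff, Finset.mem_Ioo] at this; omega⟩, z) :
            compV a z n S),
        (Quotient.mk (glueSetoid a z n S)
          (⟨i.1, by
            have := i.2; simp only [Finset.mem_sdiff, Finset.mem_Ioo] at this; omega⟩, a) :
            compV a z n S)))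

/-- Weights: a contracted vertex receives the sum of the weights of its constituents. -/
noncomputable def compW (w : V → ℕ) (a z : V) (n : ℕ) (S : Finset ℕ) :
    compV a z n S → ℕ :=
  fun c => ∑ x : Fin n × V,
    if (Quotient.mk (glueSetoid a z n S) x : compV a z n S) = c then w x.2 else 0

/-- `X_{α ∘ (G,w)}`: take `|α|` copies of `(G,w)`, join successive copies by edges
`z_i a_{i+1}`, and contract exactly the connecting edges with `i ∈ set(α^c)`. -/
noncomputable def Xcomp (E : Multiset (Sym2 V)) (w : V → ℕ) (a z : V) (α : List ℕ) :
    MvPowerSeries ℕ+ ℚ :=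
  X (compE E a z α.sum (Finset.Ioo 0 α.sum \ setC α))
    (compW w a z α.sum (Finset.Ioo 0 α.sum \ setC α))

end comp


/-! ### Auxiliary lemmas for the inclusion–exclusion corollary -/

section IEAux

lemma powerset_sum_prod' {σ : Type*} (m : Multiset σ) (g : σ → ℤ) :
    (m.powerset.map fun S => (S.map g).prod).sum = (m.map fun e => 1 + g e).prod := by
  induction m using Multiset.induction_on with
  | empty => simp
  | cons a s ih =>
    simp only [Multiset.powerset_cons, Multiset.map_add, Multiset.sum_add,
      Multiset.map_map, Function.comp, Multiset.map_cons, Multiset.prod_cons, ih]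
    rw [Multiset.sum_map_mul_left, ih]
    ring

lemma ind_prod' {σ : Type*} (S : Multiset σ) (P : σ → Prop) [DecidablePred P] :
    (S.map fun e => if P e then (1:ℤ) else 0).prod = if ∀ e ∈ S, P e then 1 else 0 := by
  induction S using Multiset.induction_on with
  | empty => simp
  | cons a s ih =>
    simp only [Multiset.map_cons, Multiset.prod_cons, ih, Multiset.mem_cons]
    by_cases h : P a <;> by_cases h2 : ∀ e ∈ s, P e <;> simp_all [h, h2]

lemma neg_ind_prod' {σ : Type*} (S : Multiset σ) (P : σ → Prop) [DecidablePred P] :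
    (S.map fun e => -(if P e then (1:ℤ) else 0)).prod
      = (-1) ^ Multiset.card S * (if ∀ e ∈ S, P e then 1 else 0) := by
  have h : (S.map fun e => -(if P e then (1:ℤ) else 0)).prod
      = (S.map fun _ => (-1:ℤ)).prod * (S.map fun e => if P e then (1:ℤ) else 0).prod := by
    rw [← Multiset.prod_map_mul]; congr 1; apply Multiset.map_congr rfl; intro x _; ring
  rw [h, ind_prod']
  congr 1
  rw [Multiset.map_const', Multiset.prod_replicate]

lemma multiset_sum_finset_sum {σ γ : Type*} [Fintype γ] (m : Multiset σ) (f : σ → γ → ℤ) :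
    (m.map fun a => ∑ x, f a x).sum = ∑ x, (m.map fun a => f a x).sum := by
  induction m using Multiset.induction_on with
  | empty => simp
  | cons a s ih => simp [ih, Finset.sum_add_distrib]

/-- Prefix length sums of a block decomposition. -/
def preB (L : List (List ℕ)) (v : ℕ) : ℕ := ((L.take v).map List.length).sum

lemma preB_eq (L : List (List ℕ)) (v : ℕ) :
    preB L v = ((L.map List.length).take v).sum := by
  unfold preB
  rw [← List.map_take]

lemma preB_mono (L : List (List ℕ)) : Monotone (preB L) := by
  intro v w h
  rw [preB_eq, preB_eq, ← Nat.add_sub_cancel' h, List.take_add, List.sum_append]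
  exact Nat.le_add_right _ _

lemma preB_total (L : List (List ℕ)) : preB L L.length = L.flatten.length := by
  rw [preB, List.take_length, List.length_flatten]

lemma preB_succ (L : List (List ℕ)) (v : ℕ) (hv : v < L.length) :
    preB L (v + 1) = preB L v + (L.get ⟨v, hv⟩).length := by
  rw [preB_eq, preB_eq, List.sum_take_succ _ v (by simpa using hv)]
  simp

lemma preB_lt_succ (L : List (List ℕ)) (hLne : ∀ l ∈ L, l ≠ []) (v : ℕ)
    (hv : v < L.length) : preB L v < preB L (v + 1) := by
  rw [preB_succ L v hv]
  have h := hLne (L.get ⟨v, hv⟩) (L.get_mem _)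
  have h2 : 0 < (L.get ⟨v, hv⟩).length := List.length_pos_iff.mpr h
  omega

lemma inBlock_lt' (L : List (List ℕ)) {v a : ℕ} (h : inBlock L v a)
    (ha : a < L.flatten.length) : v < L.length := by
  by_contra hc
  push_neg at hc
  have h1 : preB L L.length ≤ preB L v := preB_mono L hc
  rw [preB_total] at h1
  exact absurd h.1 (by change ¬ preB L v ≤ a; omega)

lemma inBlock_unique' (L : List (List ℕ)) {v w a : ℕ} (hv : inBlock L v a)
    (hw : inBlock L w a) : v = w := by
  by_contra hne
  rcases Nat.lt_or_ge v w with h | h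
  · have hm : preB L (v+1) ≤ preB L w := preB_mono L h
    have h1 := hv.2; have h2 := hw.1
    change preB L w ≤ a at h2; change a < preB L (v+1) at h1; omega
  · have h' : w < v := by omega
    have hm : preB L (w+1) ≤ preB L v := preB_mono L h'
    have h1 := hw.2; have h2 := hv.1
    change preB L v ≤ a at h2; change a < preB L (w+1) at h1; omega

lemma inBlock_exists' (L : List (List ℕ)) (hLne : ∀ l ∈ L, l ≠ []) {a : ℕ}
    (ha : a < L.flatten.length) : ∃ v, inBlock L v a := by
  set v := Nat.findGreatest (fun v => preB L v ≤ a) L.length with hvdef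
  have h0 : preB L 0 ≤ a := by simp [preB]
  have hle : preB L v ≤ a :=
    Nat.findGreatest_spec (P := fun v => preB L v ≤ a) (Nat.zero_le _) h0
  have hvle : v ≤ L.length := Nat.findGreatest_le _
  have hvlt : v < L.length := by
    rcases Nat.eq_or_lt_of_le hvle with h | h
    · exfalso; rw [h, preB_total] at hle; omega
    · exact h
  refine ⟨v, hle, ?_⟩
  have hng : ¬ preB L (v + 1) ≤ a :=
    Nat.findGreatest_is_greatest (P := fun v => preB L v ≤ a) (n := L.length)
      (by omega) (by omega)
  show a < preB L (v + 1)
  omega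

lemma rep_inBlock' (L : List (List ℕ)) (hLne : ∀ l ∈ L, l ≠ []) {v : ℕ}
    (hv : v < L.length) : inBlock L v (preB L v) :=
  ⟨le_refl _, preB_lt_succ L hLne v hv⟩

lemma preB_lt_total (L : List (List ℕ)) (hLne : ∀ l ∈ L, l ≠ []) {v : ℕ}
    (hv : v < L.length) : preB L v < L.flatten.length := by
  have h1 := preB_lt_succ L hLne v hv
  have h2 : preB L (v + 1) ≤ preB L L.length := preB_mono L (by omega)
  rw [preB_total] at h2
  omega

lemma proper_iff {V C : Type*} (E : Multiset (Sym2 V)) (κ : V → C) :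
    Proper E κ ↔ ∀ e ∈ E, ¬ (Sym2.map κ e).IsDiag := by
  constructor
  · intro h e he
    induction e using Sym2.ind with
    | _ x y =>
      rw [Sym2.map_pair_eq, Sym2.mk_isDiag_iff]
      exact h x y he
  · intro h u v hm
    have h2 := h s(u, v) hm
    rwa [Sym2.map_pair_eq, Sym2.mk_isDiag_iff] at h2

lemma proper_add {V C : Type*} (E S : Multiset (Sym2 V)) (κ : V → C) :
    Proper (E + S) κ ↔ Proper E κ ∧ Proper S κ := by
  simp only [Proper, Multiset.mem_add, or_imp, forall_and]

lemma card_eq_sum_ind {σ : Type*} [Fintype σ] (P : σ → Prop) [DecidablePred P] :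
    (Nat.card {x // P x} : ℤ) = ∑ x, if P x then 1 else 0 := by
  rw [Nat.card_eq_fintype_card, Fintype.card_subtype, Finset.card_filter]
  push_cast
  apply Finset.sum_congr rfl
  intro x _
  split <;> simp

end IEAux

/-- **Corollary (inclusion–exclusion for chromatic polynomials).**
With the same hypotheses as the inclusion–exclusion relation for extended chromatic
symmetric functions, the chromatic polynomials satisfy
`χ_G = ∑_{S ⊆ E'} (-1)^{|S|} χ_{H+S}` (as polynomials, i.e. at every number of colours `k`). -/
theorem chromatic_polynomial_inclusion_exclusion
    (α β : List ℕ) (hαpos : ∀ x ∈ α, 0 < x) (hβpos : ∀ x ∈ β, 0 < x)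
    (EG : Multiset (Sym2 (Fin α.length))) (EH : Multiset (Sym2 (Fin β.length)))
    (L : List (List ℕ)) (hLjoin : L.flatten = β) (hLne : ∀ l ∈ L, l ≠ [])
    (hLsum : α = L.map List.sum)
    (hexpansion : ∀ u v : Fin α.length,
      s(u, v) ∈ EG ↔ ∃ a b : Fin β.length,
        s(a, b) ∈ EH ∧ inBlock L (u : ℕ) (a : ℕ) ∧ inBlock L (v : ℕ) (b : ℕ))
    (E' : Multiset (Sym2 (Fin β.length)))
    (hE' : ∀ a b : Fin β.length,
      Relation.ReflTransGen (fun x y : Fin β.length => s(x, y) ∈ E') a b ↔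
        Rrel L (a : ℕ) (b : ℕ)) :
    ∀ k : ℕ, (chrom EG k : ℤ) =
      (E'.powerset.map fun S =>
        ((-1 : ℤ) ^ Multiset.card S) * (chrom (EH + S) k : ℤ)).sum := by
  intro k
  classical
  have hlen : L.length = α.length := by rw [hLsum, List.length_map]
  have hflat : L.flatten.length = β.length := by rw [hLjoin]
  have hex : ∀ a : Fin β.length, ∃ v, inBlock L v (a : ℕ) := by
    intro a
    exact inBlock_exists' L hLne (by rw [hflat]; exact a.isLt)
  choose bl hbl using hex
  have hbl_lt : ∀ a : Fin β.length, bl a < α.length := by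
    intro a
    have := inBlock_lt' L (hbl a) (by rw [hflat]; exact a.isLt)
    omega
  set blF : Fin β.length → Fin α.length := fun a => ⟨bl a, hbl_lt a⟩ with hblFdef
  set repF : Fin α.length → Fin β.length := fun v =>
    ⟨preB L (v : ℕ), by
      have hv : (v : ℕ) < L.length := by have := v.isLt; omega
      have := preB_lt_total L hLne hv
      omega⟩ with hrepFdef
  have hrep : ∀ v : Fin α.length, inBlock L (v : ℕ) ((repF v : ℕ)) := by
    intro v
    exact rep_inBlock' L hLne (by have := v.isLt; omega)
  have hblF_eq : ∀ (a : Fin β.length) (v : ℕ), inBlock L v (a : ℕ) → bl a = v := by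
    intro a v hv
    exact inBlock_unique' L (hbl a) hv
  -- the key bijection
  have hbij : Nat.card {κ : Fin β.length → Fin k //
      Proper EH κ ∧ ∀ a b : Fin β.length, Rrel L (a : ℕ) (b : ℕ) → κ a = κ b}
      = Nat.card {lam : Fin α.length → Fin k // Proper EG lam} := by
    apply Nat.card_congr
    refine ⟨fun κ => ⟨fun v => κ.1 (repF v), ?_⟩,
      fun lam => ⟨fun a => lam.1 (blF a), ?_, ?_⟩, ?_, ?_⟩
    · intro u v he
      obtain ⟨a, b, hab, hua, hvb⟩ := (hexpansion u v).mp he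
      show κ.1 (repF u) ≠ κ.1 (repF v)
      have h1 : κ.1 (repF u) = κ.1 a := κ.2.2 _ _ ⟨(u : ℕ), hrep u, hua⟩
      have h2 : κ.1 (repF v) = κ.1 b := κ.2.2 _ _ ⟨(v : ℕ), hrep v, hvb⟩
      rw [h1, h2]
      exact κ.2.1 a b hab
    · intro a b hab
      exact lam.2 (blF a) (blF b)
        ((hexpansion (blF a) (blF b)).mpr ⟨a, b, hab, hbl a, hbl b⟩)
    · rintro a b ⟨v, hva, hvb⟩
      have h1 : bl a = v := hblF_eq a v hva
      have h2 : bl b = v := hblF_eq b v hvb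
      have h3 : blF a = blF b := Fin.ext (by simp [hblFdef, h1, h2])
      show lam.1 (blF a) = lam.1 (blF b)
      rw [h3]
    · intro κ
      apply Subtype.ext
      funext a
      show κ.1 (repF (blF a)) = κ.1 a
      exact κ.2.2 _ _ ⟨bl a, hrep (blF a), hbl a⟩
    · intro lam
      apply Subtype.ext
      funext v
      show lam.1 (blF (repF v)) = lam.1 v
      have h4 : blF (repF v) = v := Fin.ext (hblF_eq (repF v) (v : ℕ) (hrep v))
      rw [h4]
  -- constancy on E'-edges vs constancy on blocks
  have hdiag_iff : ∀ κ : Fin β.length → Fin k,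
      (∀ e ∈ E', (Sym2.map κ e).IsDiag) ↔
        (∀ a b : Fin β.length, Rrel L (a : ℕ) (b : ℕ) → κ a = κ b) := by
    intro κ
    constructor
    · intro h a b hr
      have hrt := (hE' a b).mpr hr
      clear hr
      induction hrt with
      | refl => rfl
      | tail _ h2 ih =>
        have hd := h _ h2
        rw [Sym2.map_pair_eq, Sym2.mk_isDiag_iff] at hd
        exact ih.trans hd
    · intro h e he
      induction e using Sym2.ind with
      | _ x y =>
        rw [Sym2.map_pair_eq, Sym2.mk_isDiag_iff]
        exact h x y ((hE' x y).mp (Relation.ReflTransGen.single he))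
  -- counting
  calc (chrom EG k : ℤ)
      = (Nat.card {κ : Fin β.length → Fin k //
          Proper EH κ ∧ ∀ a b : Fin β.length, Rrel L (a : ℕ) (b : ℕ) → κ a = κ b} : ℤ) := by
        rw [hbij]; rfl
    _ = ∑ κ : Fin β.length → Fin k,
          if Proper EH κ ∧ ∀ a b : Fin β.length, Rrel L (a : ℕ) (b : ℕ) → κ a = κ b
          then 1 else 0 := by exact card_eq_sum_ind _
    _ = ∑ κ : Fin β.length → Fin k,
          (E'.powerset.map fun S => ((-1 : ℤ) ^ Multiset.card S) *
            (if Proper (EH + S) κ then 1 else 0)).sum := by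
        apply Finset.sum_congr rfl
        intro κ _
        have step1 : ∀ S : Multiset (Sym2 (Fin β.length)),
            ((-1 : ℤ)) ^ Multiset.card S * (if Proper (EH + S) κ then 1 else 0)
            = (if Proper EH κ then (1 : ℤ) else 0) *
                (S.map fun e => -(if ¬ (Sym2.map κ e).IsDiag then (1 : ℤ) else 0)).prod := by
          intro S
          rw [neg_ind_prod']
          have hiff : Proper (EH + S) κ ↔
              Proper EH κ ∧ ∀ e ∈ S, ¬ (Sym2.map κ e).IsDiag := by
            rw [proper_add, proper_iff S]
          by_cases h1 : Proper EH κ <;>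
            by_cases h2 : ∀ e ∈ S, ¬ (Sym2.map κ e).IsDiag <;>
            simp [hiff, h1, h2]
        symm
        calc (E'.powerset.map fun S => ((-1 : ℤ) ^ Multiset.card S) *
                (if Proper (EH + S) κ then 1 else 0)).sum
            = (E'.powerset.map fun S => (if Proper EH κ then (1 : ℤ) else 0) *
                (S.map fun e => -(if ¬ (Sym2.map κ e).IsDiag then (1 : ℤ) else 0)).prod).sum := by
              congr 1
              exact Multiset.map_congr rfl fun S _ => step1 S
          _ = (if Proper EH κ then (1 : ℤ) else 0) *
                (E'.powerset.map fun S =>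
                  (S.map fun e => -(if ¬ (Sym2.map κ e).IsDiag then (1 : ℤ) else 0)).prod).sum := by
              rw [Multiset.sum_map_mul_left]
          _ = (if Proper EH κ then (1 : ℤ) else 0) *
                (E'.map fun e => 1 + -(if ¬ (Sym2.map κ e).IsDiag then (1 : ℤ) else 0)).prod := by
              rw [powerset_sum_prod']
          _ = (if Proper EH κ then (1 : ℤ) else 0) *
                (E'.map fun e => if (Sym2.map κ e).IsDiag then (1 : ℤ) else 0).prod := by
              congr 1
              apply congrArg
              apply Multiset.map_congr rfl
              intro e _
              by_cases hd : (Sym2.map κ e).IsDiag <;> simp [hd]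
          _ = (if Proper EH κ then (1 : ℤ) else 0) *
                (if ∀ e ∈ E', (Sym2.map κ e).IsDiag then (1 : ℤ) else 0) := by
              rw [ind_prod']
              congr
          _ = if Proper EH κ ∧ ∀ a b : Fin β.length,
                Rrel L (a : ℕ) (b : ℕ) → κ a = κ b then 1 else 0 := by
              simp only [hdiag_iff κ]
              by_cases h1 : Proper EH κ <;>
                by_cases h2 : ∀ a b : Fin β.length, Rrel L (a : ℕ) (b : ℕ) → κ a = κ b <;>
                simp [h1, h2]
    _ = (E'.powerset.map fun S => ∑ κ : Fin β.length → Fin k,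
          ((-1 : ℤ) ^ Multiset.card S) * (if Proper (EH + S) κ then 1 else 0)).sum :=
        (multiset_sum_finset_sum _ _).symm
    _ = (E'.powerset.map fun S =>
          ((-1 : ℤ) ^ Multiset.card S) * (chrom (EH + S) k : ℤ)).sum := by
        congr 1
        apply Multiset.map_congr rfl
        intro S _
        rw [← Finset.mul_sum]
        congr 1
        exact (card_eq_sum_ind (fun κ => Proper (EH + S) κ)).symm

end CSF
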